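/- For all real numbers x, y ≥ 0, one has (e^{xy} - 1 - xy)^2 ≤ (e^{x^2} - 1 - x^2)(e^{y^2} - 1 - y^2). -/

import Mathlib

lemma hasSum_exp_shift (t : ℝ) :
    HasSum (fun n : ℕ => t ^ (n + 2) / Nat.factorial (n+2)) (Real.exp t - 1 - t) := by
  have h : HasSum (fun n : ℕ => t ^ n / Nat.factorial n) (Real.exp t) := by
    rw [Real.exp_eq_exp_ℝ]
    exact NormedSpace.expSeries_div_hasSum_exp t
  have := (hasSum_nat_add_iff' (f := fun n : ℕ => t ^ n / Nat.factorial n) 2).mpr h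
  simpa [Finset.sum_range_succ, Nat.factorial, sub_sub] using this

theorem stmt_1 (x y : ℝ) (hx : 0 ≤ x) (hy : 0 ≤ y) :
    (Real.exp (x * y) - 1 - x * y) ^ 2 ≤
      (Real.exp (x ^ 2) - 1 - x ^ 2) * (Real.exp (y ^ 2) - 1 - y ^ 2) := by
  have hxy := hasSum_exp_shift (x * y)
  have hx2 := hasSum_exp_shift (x ^ 2)
  have hy2 := hasSum_exp_shift (y ^ 2)
  -- partial sums
  have key : ∀ N : ℕ,
      (∑ n ∈ Finset.range N, (x*y) ^ (n+2) / Nat.factorial (n+2)) ^ 2 ≤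
        (∑ n ∈ Finset.range N, (x^2) ^ (n+2) / Nat.factorial (n+2)) *
        (∑ n ∈ Finset.range N, (y^2) ^ (n+2) / Nat.factorial (n+2)) := by
    intro N
    have := Finset.sum_mul_sq_le_sq_mul_sq (Finset.range N)
      (fun n => x ^ (n+2) / Real.sqrt ((Nat.factorial (n+2) : ℝ)))
      (fun n => y ^ (n+2) / Real.sqrt ((Nat.factorial (n+2) : ℝ)))
    have hfac : ∀ n : ℕ, (0:ℝ) < Nat.factorial (n+2) := fun n => by positivity
    calc (∑ n ∈ Finset.range N, (x*y) ^ (n+2) / Nat.factorial (n+2)) ^ 2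
        = (∑ n ∈ Finset.range N,
            (x ^ (n+2) / Real.sqrt ((Nat.factorial (n+2) : ℝ))) * (y ^ (n+2) / Real.sqrt ((Nat.factorial (n+2) : ℝ)))) ^ 2 := by
          congr 1
          refine Finset.sum_congr rfl fun n _ => ?_
          rw [mul_pow, div_mul_div_comm,
            Real.mul_self_sqrt (le_of_lt (hfac n))]
      _ ≤ (∑ n ∈ Finset.range N, (x ^ (n+2) / Real.sqrt ((Nat.factorial (n+2) : ℝ))) ^ 2) *
          (∑ n ∈ Finset.range N, (y ^ (n+2) / Real.sqrt ((Nat.factorial (n+2) : ℝ))) ^ 2) := this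
      _ = (∑ n ∈ Finset.range N, (x^2) ^ (n+2) / Nat.factorial (n+2)) *
          (∑ n ∈ Finset.range N, (y^2) ^ (n+2) / Nat.factorial (n+2)) := by
          congr 1 <;>
          · refine Finset.sum_congr rfl fun n _ => ?_
            rw [div_pow, Real.sq_sqrt (le_of_lt (hfac n)), ← pow_mul, ← pow_mul,
              mul_comm 2 (n+2)]
  have hterm : ∀ (t : ℝ), 0 ≤ t → ∀ N, (∑ n ∈ Finset.range N, t ^ (n+2) / Nat.factorial (n+2)) ≤
      Real.exp t - 1 - t := by
    intro t ht N
    exact sum_le_hasSum _ (fun n _ => by positivity) (hasSum_exp_shift t)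
  have hlim := ((hasSum_exp_shift (x*y)).tendsto_sum_nat.pow 2)
  refine le_of_tendsto hlim (Filter.Eventually.of_forall fun N => ?_)
  have h1 := hterm (x^2) (by positivity) N
  have h2 := hterm (y^2) (by positivity) N
  have hs1 : 0 ≤ ∑ n ∈ Finset.range N, (x^2) ^ (n+2) / Nat.factorial (n+2) := by
    apply Finset.sum_nonneg; intro n _; positivity
  have hs2 : 0 ≤ ∑ n ∈ Finset.range N, (y^2) ^ (n+2) / Nat.factorial (n+2) := by
    apply Finset.sum_nonneg; intro n _; positivity
  calc (∑ n ∈ Finset.range N, (x*y) ^ (n+2) / Nat.factorial (n+2)) ^ 2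
      ≤ (∑ n ∈ Finset.range N, (x^2) ^ (n+2) / Nat.factorial (n+2)) *
        (∑ n ∈ Finset.range N, (y^2) ^ (n+2) / Nat.factorial (n+2)) := key N
    _ ≤ (Real.exp (x ^ 2) - 1 - x ^ 2) * (Real.exp (y ^ 2) - 1 - y ^ 2) := by
        apply mul_le_mul h1 h2 hs2 (le_trans hs1 h1)
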